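/- arXiv:1509.00288 — 3 statements merged into one kernel-verified Lean document; each statement's English description precedes it below -/
import Mathlib

section
/- Let (X,d) be a boundedly compact metric space, o ∈ X, and let (pₙ) be a sequence of points diverging almost straightly, i.e., for every ε > 0 there exists L such that for all n ≥ m ≥ L, d(p_L, p_m) + d(p_m, p_n) - d(p_L, p_n) < ε. Then the functions fₙ(x) = d(pₙ, x) - d(pₙ, o) converge uniformly on compact sets to a 1-Lipschitz function f, and moreover lim_{n→∞} (f(pₙ) + d(o, pₙ)) = 0. -/
open Filter Topology

/-- An almost-decreasing (up to `δ`) sequence bounded below is eventually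
within `2*δ` of itself. -/
lemma aux_inf (v : ℕ → ℝ) (L : ℕ) (δ C : ℝ) (hδ : 0 < δ)
    (hC : ∀ n, L ≤ n → C ≤ v n)
    (hd : ∀ m n, L ≤ m → m ≤ n → v n ≤ v m + δ) :
    ∃ N, L ≤ N ∧ ∀ m n, N ≤ m → N ≤ n → |v n - v m| ≤ 2 * δ := by
  set S : Set ℝ := v '' Set.Ici L with hS
  have hSne : S.Nonempty := ⟨v L, ⟨L, le_refl L, rfl⟩⟩
  have hSbdd : BddBelow S := ⟨C, by rintro y ⟨n, hn, rfl⟩; exact hC n hn⟩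
  obtain ⟨a, ⟨N, hNL, rfl⟩, haN⟩ := Real.lt_sInf_add_pos hSne hδ
  refine ⟨N, hNL, fun m n hm hn => ?_⟩
  have key : ∀ k, N ≤ k → sInf S ≤ v k ∧ v k < sInf S + 2 * δ := by
    intro k hk
    have h1 : sInf S ≤ v k := csInf_le hSbdd ⟨k, le_trans hNL hk, rfl⟩
    have h2 : v k ≤ v N + δ := hd N k hNL hk
    exact ⟨h1, by linarith⟩
  obtain ⟨h1, h2⟩ := key m hm
  obtain ⟨h3, h4⟩ := key n hn
  rw [abs_le]; constructor <;> linarith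

/-- In a boundedly compact (proper) metric space, if `pₙ` diverges almost
straightly, then `fₙ(x) = d(pₙ,x) - d(pₙ,o)` converges uniformly on compact
sets to a 1-Lipschitz function `f`, and `f(pₙ) + d(o,pₙ) → 0`. -/
theorem stmt4 {X : Type*} [MetricSpace X] [ProperSpace X] (o : X) (p : ℕ → X)
    (hdiv : Tendsto (fun n => dist o (p n)) atTop atTop)
    (hstraight : ∀ ε > (0 : ℝ), ∃ L : ℕ, ∀ m n : ℕ, L ≤ m → m ≤ n →
      dist (p L) (p m) + dist (p m) (p n) - dist (p L) (p n) < ε) :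
    ∃ f : X → ℝ, LipschitzWith 1 f ∧
      (∀ K : Set X, IsCompact K →
        TendstoUniformlyOn (fun n x => dist (p n) x - dist (p n) o) f atTop K) ∧
      Tendsto (fun n => f (p n) + dist o (p n)) atTop (𝓝 0) := by
  -- key near-Cauchy estimate: for every `y` and `δ > 0`, with `L` from
  -- straightness at `δ`, the sequence `g_y n = dist (p n) y - dist (p L) (p n)`
  -- is eventually within `2δ` of itself.
  have key : ∀ (δ : ℝ), 0 < δ → ∀ (L : ℕ),
      (∀ m n : ℕ, L ≤ m → m ≤ n →
        dist (p L) (p m) + dist (p m) (p n) - dist (p L) (p n) < δ) →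
      ∀ y : X, ∃ N, L ≤ N ∧ ∀ m n, N ≤ m → N ≤ n →
        |(dist (p n) y - dist (p L) (p n)) - (dist (p m) y - dist (p L) (p m))|
          ≤ 2 * δ := by
    intro δ hδ L hL y
    apply aux_inf (fun n => dist (p n) y - dist (p L) (p n)) L δ (-dist (p L) y) hδ
    · intro n _
      have := dist_triangle (p L) (p n) y
      have h2 : dist (p L) (p n) - dist (p L) y ≤ dist (p n) y := by
        have := dist_triangle (p L) y (p n)
        have h3 : dist (p n) y = dist y (p n) := dist_comm _ _
        linarith
      linarith
    · intro m n hm hmn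
      have h1 : dist (p m) (p n) < dist (p L) (p n) - dist (p L) (p m) + δ := by
        have := hL m n hm hmn
        linarith
      have h2 : dist (p n) y ≤ dist (p n) (p m) + dist (p m) y := dist_triangle _ _ _
      have h3 : dist (p n) (p m) = dist (p m) (p n) := dist_comm _ _
      linarith
  -- pointwise Cauchy
  have hcauchy : ∀ x : X, CauchySeq (fun n => dist (p n) x - dist (p n) o) := by
    intro x
    rw [Metric.cauchySeq_iff]
    intro ε hε
    have hδ : (0 : ℝ) < ε / 5 := by linarith
    obtain ⟨L, hL⟩ := hstraight (ε / 5) hδ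
    obtain ⟨N₁, _, hN₁⟩ := key (ε / 5) hδ L hL x
    obtain ⟨N₂, _, hN₂⟩ := key (ε / 5) hδ L hL o
    refine ⟨max N₁ N₂, fun m hm n hn => ?_⟩
    have h1 := hN₁ n m (le_trans (le_max_left _ _) hn) (le_trans (le_max_left _ _) hm)
    have h2 := hN₂ n m (le_trans (le_max_right _ _) hn) (le_trans (le_max_right _ _) hm)
    rw [Real.dist_eq]
    rw [abs_le] at h1 h2
    rw [abs_lt]
    constructor <;> · obtain ⟨a1, a2⟩ := h1; obtain ⟨b1, b2⟩ := h2; linarith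
  have hconv : ∀ x : X, ∃ l : ℝ,
      Tendsto (fun n => dist (p n) x - dist (p n) o) atTop (𝓝 l) :=
    fun x => cauchySeq_tendsto_of_complete (hcauchy x)
  choose f hf using hconv
  -- uniform Lipschitz bound on the approximants
  have hlipn : ∀ (n : ℕ) (x y : X),
      dist (dist (p n) x - dist (p n) o) (dist (p n) y - dist (p n) o) ≤ dist x y := by
    intro n x y
    rw [Real.dist_eq]
    have hle : |dist (p n) x - dist (p n) y| ≤ dist x y := by
      rw [dist_comm (p n) x, dist_comm (p n) y]
      exact abs_dist_sub_le x y (p n)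
    calc |dist (p n) x - dist (p n) o - (dist (p n) y - dist (p n) o)|
        = |dist (p n) x - dist (p n) y| := by ring_nf
      _ ≤ dist x y := hle
  have hlip : LipschitzWith 1 f := by
    apply LipschitzWith.of_dist_le_mul
    intro x y
    simp only [NNReal.coe_one, one_mul]
    have ht : Tendsto (fun n => dist (dist (p n) x - dist (p n) o)
        (dist (p n) y - dist (p n) o)) atTop (𝓝 (dist (f x) (f y))) :=
      (hf x).dist (hf y)
    exact le_of_tendsto ht (Eventually.of_forall fun n => hlipn n x y)
  refine ⟨f, hlip, ?_, ?_⟩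
  · -- uniform convergence on compacts, via Ascoli
    intro K hK
    rw [tendstoUniformlyOn_iff_tendstoUniformly_comp_coe]
    haveI : CompactSpace K := isCompact_iff_compactSpace.mp hK
    have heq : Equicontinuous (fun (n : ℕ) (x : K) => dist (p n) (x : X) - dist (p n) o) := by
      apply Metric.equicontinuous_of_continuity_modulus id
      · exact tendsto_id
      · intro x y n
        simpa [Subtype.dist_eq] using hlipn n (x : X) (y : X)
    have := (heq.tendsto_uniformFun_iff_pi atTop (fun x : K => f x)).mpr ?_
    · exact UniformFun.tendsto_iff_tendstoUniformly.mp this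
    · rw [tendsto_pi_nhds]
      exact fun x => hf (x : X)
  · -- f (p n) + dist o (p n) → 0
    rw [Metric.tendsto_atTop]
    intro ε hε
    have hδ : (0 : ℝ) < ε / 6 := by linarith
    obtain ⟨L, hL⟩ := hstraight (ε / 6) hδ
    obtain ⟨N, hNL, hN⟩ := key (ε / 6) hδ L hL o
    refine ⟨N, fun n hn => ?_⟩
    have hlow : 0 ≤ f (p n) + dist o (p n) := by
      have : Tendsto (fun k => dist (p k) (p n) - dist (p k) o + dist o (p n))
          atTop (𝓝 (f (p n) + dist o (p n))) := (hf (p n)).add_const _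
      refine ge_of_tendsto this (Eventually.of_forall fun k => ?_)
      have h1 : dist (p k) o ≤ dist (p k) (p n) + dist (p n) o := dist_triangle _ _ _
      have h2 : dist (p n) o = dist o (p n) := dist_comm _ _
      linarith
    have hup : f (p n) + dist o (p n) ≤ 5 * (ε / 6) := by
      have ht : Tendsto (fun k => dist (p k) (p n) - dist (p k) o + dist o (p n))
          atTop (𝓝 (f (p n) + dist o (p n))) := (hf (p n)).add_const _
      refine le_of_tendsto ht ?_
      filter_upwards [eventually_ge_atTop n] with k hk
      -- for k ≥ n ≥ N ≥ L:
      have h1 : dist (p n) (p k) < dist (p L) (p k) - dist (p L) (p n) + ε / 6 := by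
        have := hL n k (le_trans hNL hn) hk
        linarith
      have h2 := hN n k hn (le_trans hn hk)
      rw [abs_le] at h2
      have h3 : dist (p k) (p n) = dist (p n) (p k) := dist_comm _ _
      have h4 : dist (p n) o = dist o (p n) := dist_comm _ _
      -- (dist (p k) o - dist (p L) (p k)) - (dist (p n) o - dist (p L) (p n)) ≥ -2δ
      obtain ⟨h2a, h2b⟩ := h2
      linarith
    rw [Real.dist_eq, sub_zero, abs_lt]
    constructor <;> linarith
end

section
/- Any curve in ℝ² that starts at the origin, ends at the point (0, 2R) (R > 0), and encloses balayage area πR²/2 + 2Rh with h > 0 relative to the chord, and which is an arc of a circle, must be an arc of radius S_R > R centered at (μ_R, R) with μ_R > 0 and S_R² = R² + μ_R²; moreover its balayage area A satisfies πS_R²/2 + 2Rμ_R ≤ A ≤ πS_R²/2 + 2S_Rμ_R. -/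
open Real

/-- Trig inequality: `(π/2)·sin²β ≤ β + sin β · cos β` on `[0, π/2]`. -/
lemma stmt17_aux1 (b : ℝ) (hb0 : 0 ≤ b) (hb1 : b ≤ π / 2) :
    π / 2 * Real.sin b ^ 2 ≤ b + Real.sin b * Real.cos b := by
  have hpi : (0:ℝ) < π := Real.pi_pos
  set g : ℝ → ℝ := fun u => 2 * u + Real.sin (2 * u) - π / 2 * (1 - Real.cos (2 * u)) with hgdef
  have hgd : ∀ u : ℝ, HasDerivAt g (2 + 2 * Real.cos (2 * u) - π * Real.sin (2 * u)) u := by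
    intro u
    have h2u : HasDerivAt (fun u : ℝ => 2 * u) 2 u := by
      simpa using (hasDerivAt_id u).const_mul (2:ℝ)
    have hsin : HasDerivAt (fun u : ℝ => Real.sin (2 * u)) (Real.cos (2 * u) * 2) u :=
      (Real.hasDerivAt_sin (2 * u)).comp u h2u
    have hcos : HasDerivAt (fun u : ℝ => Real.cos (2 * u)) (-Real.sin (2 * u) * 2) u :=
      (Real.hasDerivAt_cos (2 * u)).comp u h2u
    have : HasDerivAt g (2 + Real.cos (2 * u) * 2 - π / 2 * (0 - (-Real.sin (2 * u) * 2))) u :=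
      (h2u.add hsin).sub (((hasDerivAt_const u (1:ℝ)).sub hcos).const_mul (π / 2))
    convert this using 1; ring
  have hd : ∀ u : ℝ, HasDerivAt (fun u : ℝ => 2 * Real.cos u - π * Real.sin u)
      (-2 * Real.sin u - π * Real.cos u) u := by
    intro u
    have : HasDerivAt (fun u : ℝ => 2 * Real.cos u - π * Real.sin u)
        (2 * (-Real.sin u) - π * Real.cos u) u :=
      ((Real.hasDerivAt_cos u).const_mul 2).sub ((Real.hasDerivAt_sin u).const_mul π)
    convert this using 1; ring
  set d : ℝ → ℝ := fun u => 2 * Real.cos u - π * Real.sin u with hddef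
  have hdanti : AntitoneOn d (Set.Icc 0 (π / 2)) := by
    apply antitoneOn_of_deriv_nonpos (convex_Icc _ _)
    · exact (Continuous.continuousOn (by continuity))
    · intro u hu
      exact (hd u).differentiableAt.differentiableWithinAt
    · intro u hu
      rw [interior_Icc] at hu
      rw [(hd u).deriv]
      obtain ⟨hu1, hu2⟩ := hu
      have h1 : 0 ≤ Real.sin u := Real.sin_nonneg_of_nonneg_of_le_pi hu1.le (by linarith)
      have h2 : 0 ≤ Real.cos u := Real.cos_nonneg_of_mem_Icc ⟨by linarith, hu2.le⟩
      nlinarith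
  set u₀ : ℝ := Real.arctan (2 / π) with hu₀def
  have hu₀pos : 0 ≤ u₀ := by
    rw [hu₀def, ← Real.arctan_zero]
    exact Real.arctan_strictMono.monotone (by positivity)
  have hu₀lt : u₀ < π / 2 := Real.arctan_lt_pi_div_two _
  have hdu₀ : d u₀ = 0 := by
    have hs : Real.sin u₀ = (2 / π) / Real.sqrt (1 + (2 / π) ^ 2) := Real.sin_arctan _
    have hc : Real.cos u₀ = 1 / Real.sqrt (1 + (2 / π) ^ 2) := Real.cos_arctan _
    rw [hddef]; simp only; rw [hs, hc]
    have : Real.sqrt (1 + (2 / π) ^ 2) ≠ 0 := by positivity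
    field_simp
    ring
  have hderivval : ∀ u ∈ Set.Icc 0 (π/2), deriv g u = 2 * Real.cos u * d u := by
    intro u hu
    rw [(hgd u).deriv, hddef]
    simp only
    rw [Real.cos_two_mul, Real.sin_two_mul]; ring
  have hgcont : Continuous g := by
    apply Continuous.sub
    · exact (continuous_const.mul continuous_id).add (Real.continuous_sin.comp (by continuity))
    · exact continuous_const.mul (continuous_const.sub (Real.continuous_cos.comp (by continuity)))
  have hg0 : g 0 = 0 := by simp [hgdef]
  have hgpi2 : g (π / 2) = 0 := by
    rw [hgdef]; simp only
    rw [show 2 * (π / 2) = π by ring, Real.sin_pi, Real.cos_pi]; ring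
  have hkey : 0 ≤ g b := by
    rcases le_or_gt b u₀ with hb | hb
    · -- monotone on [0, u₀]
      have hmono : MonotoneOn g (Set.Icc 0 u₀) := by
        apply monotoneOn_of_deriv_nonneg (convex_Icc _ _) hgcont.continuousOn
        · intro u hu; exact (hgd u).differentiableAt.differentiableWithinAt
        · intro u hu
          rw [interior_Icc] at hu
          obtain ⟨hu1, hu2⟩ := hu
          have huIcc : u ∈ Set.Icc 0 (π/2) := ⟨hu1.le, by linarith⟩
          rw [hderivval u huIcc]
          have h2 : 0 ≤ Real.cos u := Real.cos_nonneg_of_mem_Icc ⟨by linarith [huIcc.1], huIcc.2⟩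
          have h3 : 0 ≤ d u := by
            have := hdanti huIcc ⟨hu₀pos, hu₀lt.le⟩ hu2.le
            linarith [hdu₀ ▸ this]
          positivity
      have := hmono ⟨le_rfl, hu₀pos⟩ ⟨hb0, hb⟩ hb0
      linarith [hg0 ▸ this]
    · -- antitone on [u₀, π/2]
      have hanti : AntitoneOn g (Set.Icc u₀ (π/2)) := by
        apply antitoneOn_of_deriv_nonpos (convex_Icc _ _) hgcont.continuousOn
        · intro u hu; exact (hgd u).differentiableAt.differentiableWithinAt
        · intro u hu
          rw [interior_Icc] at hu
          obtain ⟨hu1, hu2⟩ := hu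
          have huIcc : u ∈ Set.Icc 0 (π/2) := ⟨by linarith [hu₀pos], hu2.le⟩
          rw [hderivval u huIcc]
          have h2 : 0 ≤ Real.cos u := Real.cos_nonneg_of_mem_Icc ⟨by linarith [huIcc.1], huIcc.2⟩
          have h3 : d u ≤ 0 := by
            have := hdanti ⟨hu₀pos, hu₀lt.le⟩ huIcc hu1.le
            linarith [hdu₀ ▸ this]
          nlinarith
      have := hanti ⟨hb.le, hb1⟩ ⟨hu₀lt.le, le_rfl⟩ hb1
      linarith [hgpi2 ▸ this]
  have hexp : g b = 2 * b + 2 * Real.sin b * Real.cos b - π * Real.sin b ^ 2 := by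
    rw [hgdef]; simp only
    rw [Real.sin_two_mul, Real.cos_two_mul]
    linear_combination π * Real.sin_sq_add_cos_sq b
  linarith [hexp ▸ hkey]

/-- Trig inequality: `α ≤ sin α · (2 - cos α)` on `[0, π/2]`. -/
lemma stmt17_aux2 (a : ℝ) (ha0 : 0 ≤ a) (ha1 : a ≤ π / 2) :
    a ≤ Real.sin a * (2 - Real.cos a) := by
  set f : ℝ → ℝ := fun u => Real.sin u * (2 - Real.cos u) - u with hfdef
  have hfd : ∀ u : ℝ, HasDerivAt f (2 * Real.cos u * (1 - Real.cos u)) u := by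
    intro u
    have : HasDerivAt f (Real.cos u * (2 - Real.cos u) +
        Real.sin u * (0 - (-Real.sin u)) - 1) u :=
      (((Real.hasDerivAt_sin u).mul ((hasDerivAt_const u (2:ℝ)).sub
        (Real.hasDerivAt_cos u)))).sub (hasDerivAt_id u)
    convert this using 1
    have := Real.sin_sq_add_cos_sq u
    nlinarith [this]
  have hmono : MonotoneOn f (Set.Icc 0 (π / 2)) := by
    apply monotoneOn_of_deriv_nonneg (convex_Icc _ _)
    · exact Continuous.continuousOn (by
        apply Continuous.sub _ continuous_id
        exact Real.continuous_sin.mul (continuous_const.sub Real.continuous_cos))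
    · intro u hu; exact (hfd u).differentiableAt.differentiableWithinAt
    · intro u hu
      rw [interior_Icc] at hu
      rw [(hfd u).deriv]
      have h2 : 0 ≤ Real.cos u := Real.cos_nonneg_of_mem_Icc ⟨by linarith [hu.1], hu.2.le⟩
      have h3 : Real.cos u ≤ 1 := Real.cos_le_one u
      nlinarith
  have hf0 : f 0 = 0 := by simp [hfdef]
  have := hmono ⟨le_rfl, by linarith [Real.pi_pos]⟩ ⟨ha0, ha1⟩ ha0
  rw [hf0] at this
  simp only [hfdef] at this
  linarith


/-- Continuous angle lift for a continuous path on a circle of radius `S` about `0`. -/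
lemma stmt17_lift (S T : ℝ) (hS : 0 < S) (hT : 0 < T) (z : ℝ → ℂ)
    (hz : Continuous z) (hnorm : ∀ t, ‖z t‖ = S) :
    ∃ θ : ℝ → ℝ, Continuous θ ∧ θ 0 = (z 0).arg ∧
      ∀ t ∈ Set.Icc 0 T, (S : ℂ) * Complex.exp (θ t * Complex.I) = z t := by
  have hz0 : ∀ t, z t ≠ 0 := by
    intro t h
    have := hnorm t
    rw [h, norm_zero] at this
    exact hS.ne this
  -- uniform continuity on [0, T]
  have huc : UniformContinuousOn z (Set.Icc 0 T) :=
    (isCompact_Icc).uniformContinuousOn_of_continuous hz.continuousOn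
  obtain ⟨δ, hδ, hucd⟩ := (Metric.uniformContinuousOn_iff).mp huc S hS
  -- choose n with T/n < δ
  obtain ⟨n, hn⟩ := exists_nat_gt (T / δ)
  have hn0 : 0 < (n : ℝ) := lt_trans (by positivity) hn
  have hn0' : (n : ℝ) ≠ 0 := hn0.ne'
  have hTn : T / n < δ := by
    rw [div_lt_iff₀ hn0]
    have h := mul_lt_mul_of_pos_right hn hδ
    rw [div_mul_cancel₀ _ hδ.ne'] at h
    linarith
  set τ : ℕ → ℝ := fun i => T * i / n with hτdef
  have hτ0 : τ 0 = 0 := by simp [hτdef]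
  have hτn : τ n = T := by
    show T * (n:ℝ) / n = T; exact mul_div_cancel_right₀ T hn0'
  have hτnonneg : ∀ i, 0 ≤ τ i := fun i => by positivity
  have hτmono : ∀ i, τ i ≤ τ (i + 1) := by
    intro i
    simp only [hτdef]
    rw [div_le_div_iff₀ hn0 hn0]
    push_cast
    nlinarith [hT.le, hn0]
  have hτstep : ∀ i, τ (i + 1) - τ i = T / n := by
    intro i
    rw [hτdef]; push_cast; field_simp; ring
  have hτle : ∀ i, i ≤ n → τ i ≤ T := by
    intro i hi
    rw [hτdef, div_le_iff₀ hn0]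
    have : (i : ℝ) ≤ n := by exact_mod_cast hi
    nlinarith [hT.le]
  -- the key distance bound
  have key : ∀ (t : ℝ) (i : ℕ), i + 1 ≤ n →
      ‖z (min t (τ (i + 1))) - z (min t (τ i))‖ < 2 * S := by
    intro t i hi
    rcases le_or_gt t (τ i) with h | h
    · have h1 : min t (τ i) = t := min_eq_left h
      have h2 : min t (τ (i + 1)) = t := min_eq_left (h.trans (hτmono i))
      rw [h1, h2, sub_self, norm_zero]; positivity
    · have h1 : min t (τ i) = τ i := min_eq_right h.le
      set a := min t (τ (i + 1)) with ha
      have haT : a ∈ Set.Icc 0 T := by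
        constructor
        · exact le_min (by linarith [hτnonneg i]) (hτnonneg (i + 1))
        · exact le_trans (min_le_right _ _) (hτle (i + 1) hi)
      have hbT : τ i ∈ Set.Icc 0 T := ⟨hτnonneg i, hτle i (by omega)⟩
      have hab : dist a (τ i) < δ := by
        rw [Real.dist_eq, abs_of_nonneg (by
          rcases min_le_iff.mp (le_refl a) with _ | _
          · exact sub_nonneg.mpr (le_min h.le (hτmono i))
          · exact sub_nonneg.mpr (le_min h.le (hτmono i)))]
        have : a - τ i ≤ τ (i + 1) - τ i := by
          have := min_le_right t (τ (i + 1)); linarith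
        rw [hτstep i] at this
        linarith
      have := hucd a haT (τ i) hbT hab
      rw [Complex.dist_eq] at this
      rw [h1]
      linarith
  -- ratios
  set r : ℝ → ℕ → ℂ := fun t i => z (min t (τ (i + 1))) / z (min t (τ i)) with hrdef
  have habs_r : ∀ t i, ‖r t i‖ = 1 := by
    intro t i
    rw [hrdef]; simp only [norm_div, hnorm]
    exact div_self hS.ne'
  have hslit : ∀ (t : ℝ) (i : ℕ), i + 1 ≤ n → r t i ∈ Complex.slitPlane := by
    intro t i hi
    rw [Complex.mem_slitPlane_iff]
    by_contra hcon
    push_neg at hcon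
    obtain ⟨hre, him⟩ := hcon
    -- r t i is real with |r| = 1 and re ≤ 0, so r = -1
    have habs := habs_r t i
    have hrre : (r t i) = ((r t i).re : ℂ) := by
      apply Complex.ext <;> simp [him]
    have : |(r t i).re| = 1 := by
      rw [hrre, Complex.norm_real, Real.norm_eq_abs] at habs; exact habs
    have hrneg : (r t i).re = -1 := by
      rcases abs_eq (by norm_num : (0:ℝ) ≤ 1) |>.mp this with h | h
      · linarith
      · exact h
    have hreq : r t i = -1 := by rw [hrre, hrneg]; norm_num
    have hzeq : z (min t (τ (i + 1))) = -z (min t (τ i)) := by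
      have hne := hz0 (min t (τ i))
      have h' : z (min t (τ (i + 1))) / z (min t (τ i)) = -1 := hreq
      rw [div_eq_iff hne] at h'
      linear_combination h'
    have h2 := key t i hi
    rw [hzeq] at h2
    have : ‖-z (min t (τ i)) - z (min t (τ i))‖ = 2 * S := by
      have : -z (min t (τ i)) - z (min t (τ i)) = -(2 * z (min t (τ i))) := by ring
      rw [this, norm_neg, norm_mul, hnorm]
      simp
    linarith
  -- the lift
  set θ : ℝ → ℝ := fun t => (z 0).arg + ∑ i ∈ Finset.range n, (r t i).arg with hθdef
  have hrcont : ∀ i : ℕ, Continuous fun t => r t i := by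
    intro i
    exact Continuous.div (hz.comp (continuous_id.min continuous_const))
      (hz.comp (continuous_id.min continuous_const)) (fun t => hz0 _)
  have hθcont : Continuous θ := by
    apply continuous_const.add
    apply continuous_finset_sum
    intro i hi
    rw [continuous_iff_continuousAt]
    intro t
    exact ContinuousAt.comp (f := fun s => r s i) (x := t)
      (Complex.continuousAt_arg (hslit t i (Finset.mem_range.mp hi)))
      ((hrcont i).continuousAt)
  have hθ0 : θ 0 = (z 0).arg := by
    rw [hθdef]
    simp only
    have : ∀ i ∈ Finset.range n, (r 0 i).arg = 0 := by
      intro i _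
      have h1 : min (0:ℝ) (τ (i+1)) = 0 := min_eq_left (hτnonneg _)
      have h2 : min (0:ℝ) (τ i) = 0 := min_eq_left (hτnonneg _)
      rw [hrdef]
      simp only [h1, h2, div_self (hz0 0), Complex.arg_one]
    rw [Finset.sum_congr rfl this]
    simp
  have hprod : ∀ (t : ℝ) (m : ℕ), (∏ i ∈ Finset.range m, r t i)
      = z (min t (τ m)) / z (min t (τ 0)) := by
    intro t m
    induction m with
    | zero => simp [div_self (hz0 _)]
    | succ m ih =>
      rw [Finset.prod_range_succ, ih, hrdef]
      simp only
      rw [div_mul_div_comm, mul_comm (z (min t (τ 0))) (z (min t (τ m)))]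
      exact mul_div_mul_left _ _ (hz0 _)
  refine ⟨θ, hθcont, hθ0, ?_⟩
  intro t ht
  have hexp_sum : Complex.exp ((θ t : ℝ) * Complex.I)
      = Complex.exp ((z 0).arg * Complex.I) * ∏ i ∈ Finset.range n,
        Complex.exp ((r t i).arg * Complex.I) := by
    rw [hθdef]
    simp only
    push_cast
    rw [add_mul, Complex.exp_add, Finset.sum_mul, Complex.exp_sum]
  have hexp_arg : ∀ i ∈ Finset.range n, Complex.exp ((r t i).arg * Complex.I) = r t i := by
    intro i _
    have := Complex.norm_mul_exp_arg_mul_I (r t i)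
    rw [habs_r t i] at this
    simpa using this
  have hexp_arg0 : (S : ℂ) * Complex.exp ((z 0).arg * Complex.I) = z 0 := by
    have := Complex.norm_mul_exp_arg_mul_I (z 0)
    rw [hnorm 0] at this
    exact this
  rw [hexp_sum, Finset.prod_congr rfl hexp_arg, hprod t n]
  have hminT : min t (τ n) = t := by rw [hτn]; exact min_eq_left ht.2
  have hmin0 : min t (τ 0) = 0 := by rw [hτ0]; exact min_eq_right ht.1
  rw [hminT, hmin0, ← mul_assoc, hexp_arg0, mul_comm, div_mul_cancel₀ _ (hz0 0)]


set_option maxHeartbeats 1000000 in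
/-- A circular arc from `(0,0)` to `(0,2R)` whose balayage area is
`πR²/2 + 2Rh` with `h > 0` lies on a circle of radius `S > R` centered at
`(μ, R)` with `μ > 0` and `S² = R² + μ²`, and its balayage area `A`
satisfies `πS²/2 + 2Rμ ≤ A ≤ πS²/2 + 2Sμ`. -/
theorem stmt17 (R h T S : ℝ) (hR : 0 < R) (hh : 0 < h) (hT : 0 < T) (hS : 0 < S)
    (ρ ρ' : ℝ → ℝ × ℝ) (c : ℝ × ℝ)
    (hderiv : ∀ t ∈ Set.Icc 0 T, HasDerivAt ρ (ρ' t) t)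
    (hcirc : ∀ t ∈ Set.Icc 0 T,
      ((ρ t).1 - c.1) ^ 2 + ((ρ t).2 - c.2) ^ 2 = S ^ 2)
    (h0 : ρ 0 = (0, 0)) (hend : ρ T = (0, 2 * R))
    (hinj : Set.InjOn ρ (Set.Ico 0 T))
    (harea : (1/2) * ∫ t in (0:ℝ)..T, ((ρ t).1 * (ρ' t).2 - (ρ t).2 * (ρ' t).1)
      = π * R ^ 2 / 2 + 2 * R * h) :
    R < S ∧ ∃ μ : ℝ, 0 < μ ∧ c = (μ, R) ∧ S ^ 2 = R ^ 2 + μ ^ 2 ∧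
      π * S ^ 2 / 2 + 2 * R * μ ≤ π * R ^ 2 / 2 + 2 * R * h ∧
      π * R ^ 2 / 2 + 2 * R * h ≤ π * S ^ 2 / 2 + 2 * S * μ := by
  have hpi := Real.pi_pos
  have hmem0 : (0:ℝ) ∈ Set.Icc 0 T := ⟨le_rfl, hT.le⟩
  have hmemT : T ∈ Set.Icc 0 T := ⟨hT.le, le_rfl⟩
  have e0 := hcirc 0 hmem0
  rw [h0] at e0
  have eT := hcirc T hmemT
  rw [hend] at eT
  simp only at e0 eT
  -- c.2 = R
  have hc2 : c.2 = R := by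
    have h4 : 4 * R * (R - c.2) = 0 := by linear_combination eT - e0
    rcases mul_eq_zero.mp h4 with h' | h'
    · exfalso; nlinarith
    · linarith
  set μ := c.1 with hμdef
  rw [hc2] at e0 eT
  have hS2 : S ^ 2 = R ^ 2 + μ ^ 2 := by linear_combination - e0
  have hμltS : μ < S := by nlinarith
  have hμgtS : -S < μ := by nlinarith
  -- continuity of ρ on Icc
  have hρcont : ContinuousOn ρ (Set.Icc 0 T) := fun t ht =>
    (hderiv t ht).continuousAt.continuousWithinAt
  -- clamp
  set clamp : ℝ → ℝ := fun t => max 0 (min t T) with hclampdef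
  have hclampmem : ∀ t, clamp t ∈ Set.Icc 0 T := fun t =>
    ⟨le_max_left _ _, max_le hT.le (min_le_right _ _)⟩
  have hclampeq : ∀ t ∈ Set.Icc 0 T, clamp t = t := by
    intro t ht
    rw [hclampdef]
    simp only
    rw [min_eq_left ht.2, max_eq_right ht.1]
  have hclampcont : Continuous clamp := continuous_const.max (continuous_id.min continuous_const)
  -- the complex path
  set z : ℝ → ℂ := fun t => ((ρ (clamp t)).1 - μ : ℝ) + ((ρ (clamp t)).2 - R : ℝ) * Complex.I
    with hzdef
  have hρclamp : Continuous fun t => ρ (clamp t) :=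
    hρcont.comp_continuous hclampcont hclampmem
  have hzcont : Continuous z := by
    apply Continuous.add
    · exact Complex.continuous_ofReal.comp ((continuous_fst.comp hρclamp).sub continuous_const)
    · exact (Complex.continuous_ofReal.comp
        ((continuous_snd.comp hρclamp).sub continuous_const)).mul continuous_const
  have hzre : ∀ t, (z t).re = (ρ (clamp t)).1 - μ := by
    intro t; simp [hzdef]
  have hzim : ∀ t, (z t).im = (ρ (clamp t)).2 - R := by
    intro t; simp [hzdef]
  have hznormSq : ∀ t, Complex.normSq (z t) = S ^ 2 := by
    intro t
    rw [Complex.normSq_apply, hzre, hzim]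
    have := hcirc (clamp t) (hclampmem t)
    rw [hc2] at this
    nlinarith [this]
  have hznorm : ∀ t, ‖z t‖ = S := by
    intro t
    rw [Complex.norm_def, hznormSq, Real.sqrt_sq hS.le]
  have hzne : ∀ t, z t ≠ 0 := by
    intro t hzt
    have := hznorm t
    rw [hzt, norm_zero] at this
    exact hS.ne this
  -- the lift
  obtain ⟨θ, hθcont, hθ0arg, hθexp⟩ := stmt17_lift S T hS hT z hzcont hznorm
  -- the integrand
  set q : ℝ → ℝ := fun t => (ρ t).1 * (ρ' t).2 - (ρ t).2 * (ρ' t).1 with hqdef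
  have hqint : IntervalIntegrable q MeasureTheory.volume 0 T := by
    by_contra hq
    rw [intervalIntegral.integral_undef hq] at harea
    nlinarith
  -- Φ and its derivative
  set Φ : ℝ → ℝ := fun t => S ^ 2 * θ t + μ * ((ρ t).2 - R) - R * ((ρ t).1 - μ) with hΦdef
  have hΦcont : ContinuousOn Φ (Set.Icc 0 T) := by
    apply ContinuousOn.sub
    · apply ContinuousOn.add
      · exact continuousOn_const.mul hθcont.continuousOn
      · exact continuousOn_const.mul ((continuous_snd.comp_continuousOn hρcont).sub
          continuousOn_const)
    · exact continuousOn_const.mul ((continuous_fst.comp_continuousOn hρcont).sub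
        continuousOn_const)
  have hΦderiv : ∀ t ∈ Set.Ioo 0 T, HasDerivAt Φ (q t) t := by
    intro t ht
    have htIcc : t ∈ Set.Icc 0 T := Set.Ioo_subset_Icc_self ht
    have hIccnhds : Set.Icc 0 T ∈ nhds t := by
      apply Filter.mem_of_superset (Ioo_mem_nhds ht.1 ht.2) Set.Ioo_subset_Icc_self
    have hx : HasDerivAt (fun s => (ρ s).1) (ρ' t).1 t :=
      (ContinuousLinearMap.fst ℝ ℝ ℝ).hasFDerivAt.comp_hasDerivAt t (hderiv t htIcc)
    have hy : HasDerivAt (fun s => (ρ s).2) (ρ' t).2 t :=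
      (ContinuousLinearMap.snd ℝ ℝ ℝ).hasFDerivAt.comp_hasDerivAt t (hderiv t htIcc)
    -- unclamped path
    set zt : ℝ → ℂ := fun s => ((ρ s).1 - μ : ℝ) + ((ρ s).2 - R : ℝ) * Complex.I with hztdef
    have hzteq : ∀ s ∈ Set.Icc 0 T, z s = zt s := by
      intro s hs
      rw [hzdef, hztdef]
      simp only [hclampeq s hs]
    have hztd : HasDerivAt zt (((ρ' t).1 : ℂ) + ((ρ' t).2 : ℂ) * Complex.I) t := by
      exact ((hx.sub_const μ).ofReal_comp).add
        (((hy.sub_const R).ofReal_comp).mul_const Complex.I)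
    have hztt_ne : zt t ≠ 0 := by
      rw [← hzteq t htIcc]; exact hzne t
    have hztnormSq : Complex.normSq (zt t) = S ^ 2 := by
      rw [← hzteq t htIcc]; exact hznormSq t
    -- derivative of the local log
    set L : ℝ → ℝ := fun s => (Complex.log (zt s / zt t)).im with hLdef
    have hquot : HasDerivAt (fun s => zt s / zt t)
        ((((ρ' t).1 : ℂ) + ((ρ' t).2 : ℂ) * Complex.I) / zt t) t := hztd.div_const _
    have hlog : HasDerivAt (fun s => Complex.log (zt s / zt t))
        (((((ρ' t).1 : ℂ) + ((ρ' t).2 : ℂ) * Complex.I) / zt t) / (zt t / zt t)) t := by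
      apply hquot.clog_real
      rw [div_self hztt_ne]
      exact Complex.one_mem_slitPlane
    have hlog' : HasDerivAt (fun s => Complex.log (zt s / zt t))
        ((((ρ' t).1 : ℂ) + ((ρ' t).2 : ℂ) * Complex.I) / zt t) t := by
      rw [div_self hztt_ne, div_one] at hlog
      exact hlog
    have hL : HasDerivAt L (((((ρ' t).1 : ℂ) + ((ρ' t).2 : ℂ) * Complex.I) / zt t).im) t :=
      (Complex.imCLM.hasFDerivAt).comp_hasDerivAt t hlog'
    -- value of the derivative
    have hLval : ((((ρ' t).1 : ℂ) + ((ρ' t).2 : ℂ) * Complex.I) / zt t).im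
        = (((ρ t).1 - μ) * (ρ' t).2 - ((ρ t).2 - R) * (ρ' t).1) / S ^ 2 := by
      rw [Complex.div_im, hztnormSq]
      rw [hztdef]
      simp only [Complex.add_im, Complex.ofReal_im, Complex.mul_im, Complex.ofReal_re,
        Complex.I_im, Complex.I_re, Complex.add_re, Complex.mul_re]
      ring
    -- local equality of θ with θ t + L
    rw [hLval] at hL
    have h1ev : ∀ᶠ s in nhds t, s ∈ Set.Ioo 0 T := Ioo_mem_nhds ht.1 ht.2
    have h2ev : ∀ᶠ s in nhds t, |θ s - θ t| < 1 := by
      have hcont : Continuous fun s => |θ s - θ t| := (hθcont.sub continuous_const).abs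
      exact (hcont.tendsto t).eventually_lt_const (by simp)
    have h3ev : ∀ᶠ s in nhds t, ‖z s - z t‖ < S := by
      have hcont : Continuous fun s => ‖z s - z t‖ :=
        continuous_norm.comp (hzcont.sub continuous_const)
      exact (hcont.tendsto t).eventually_lt_const (by simpa using hS)
    have heq : θ =ᶠ[nhds t] fun s => θ t + L s := by
      filter_upwards [h1ev, h2ev, h3ev] with s hs1 hs2 hs3
      have hsIcc : s ∈ Set.Icc 0 T := Set.Ioo_subset_Icc_self hs1
      set w : ℂ := z s / z t with hwdef
      have hSC : (S : ℂ) ≠ 0 := by exact_mod_cast hS.ne'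
      have hw_abs : ‖w‖ = 1 := by
        rw [hwdef, norm_div, hznorm, hznorm, div_self hS.ne']
      have hexp_s := hθexp s hsIcc
      have hexp_t := hθexp t htIcc
      have hwexp : Complex.exp ((θ s - θ t : ℝ) * Complex.I) = w := by
        rw [hwdef, ← hexp_s, ← hexp_t, mul_div_mul_left _ _ hSC, ← Complex.exp_sub]
        congr 1
        push_cast
        ring
      have habs1 : ‖w - 1‖ < 1 := by
        have : w - 1 = (z s - z t) / z t := by
          rw [hwdef, div_sub_one (hzne t)]
        rw [this, norm_div, hznorm]
        rw [div_lt_one hS]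
        exact hs3
      have hre : 0 < w.re := by
        have h1 := Complex.abs_re_le_norm (w - 1)
        have h2 : (w - 1).re = w.re - 1 := by simp
        rw [h2] at h1
        have := abs_lt.mp (lt_of_le_of_lt h1 habs1)
        linarith [this.1]
      have hargpi2 : |w.arg| < π / 2 :=
        Complex.abs_arg_lt_pi_div_two_iff.mpr (Or.inl hre)
      have hexparg : Complex.exp (w.arg * Complex.I) = w := by
        have := Complex.norm_mul_exp_arg_mul_I w
        rw [hw_abs] at this
        simpa using this
      have hwne : w ≠ 0 := div_ne_zero (hzne s) (hzne t)
      have hwexp' : Complex.exp (((θ s : ℂ) - (θ t : ℂ)) * Complex.I) = w := by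
        have h := hwexp
        push_cast at h
        exact h
      have hone : Complex.exp ((θ s - θ t - w.arg : ℝ) * Complex.I) = 1 := by
        push_cast
        rw [sub_mul, Complex.exp_sub, hwexp', hexparg, div_self hwne]
      obtain ⟨k, hk⟩ := Complex.exp_eq_one_iff.mp hone
      have hkreal : θ s - θ t - w.arg = k * (2 * π) := by
        have := congrArg Complex.im hk
        simpa using this
      have hk0 : k = 0 := by
        by_contra hkne
        have hk1 : (1:ℝ) ≤ |(k:ℝ)| := by
          have : (1:ℤ) ≤ |k| := Int.one_le_abs hkne
          calc (1:ℝ) = ((1:ℤ):ℝ) := by norm_num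
          _ ≤ ((|k|:ℤ):ℝ) := by exact_mod_cast this
          _ = |(k:ℝ)| := by push_cast; ring
        have h5 : |θ s - θ t - w.arg| < 1 + π / 2 :=
          lt_of_le_of_lt (abs_sub _ _) (add_lt_add hs2 hargpi2)
        rw [hkreal, abs_mul] at h5
        have : |(2:ℝ) * π| = 2 * π := abs_of_pos (by linarith)
        rw [this] at h5
        nlinarith [Real.pi_gt_three]
      rw [hk0] at hkreal
      push_cast at hkreal
      have hargeq : θ s - θ t = w.arg := by linarith
      have : L s = w.arg := by
        rw [hLdef]
        simp only
        rw [← hzteq s hsIcc, ← hzteq t htIcc, ← hwdef, Complex.log_im]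
      rw [this]
      linarith
    have hθd : HasDerivAt θ
        ((((ρ t).1 - μ) * (ρ' t).2 - ((ρ t).2 - R) * (ρ' t).1) / S ^ 2) t :=
      (hL.const_add (θ t)).congr_of_eventuallyEq heq
    have hΦd : HasDerivAt Φ
        (S ^ 2 * ((((ρ t).1 - μ) * (ρ' t).2 - ((ρ t).2 - R) * (ρ' t).1) / S ^ 2)
          + μ * (ρ' t).2 - R * (ρ' t).1) t :=
      ((hθd.const_mul (S ^ 2)).add ((hy.sub_const R).const_mul μ)).sub
        ((hx.sub_const μ).const_mul R)
    convert hΦd using 1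
    rw [hqdef]
    field_simp
    ring
  -- FTC
  have hFTC : (∫ s in (0:ℝ)..T, q s) = Φ T - Φ 0 :=
    intervalIntegral.integral_eq_sub_of_hasDeriv_right_of_le hT.le hΦcont
      (fun s hs => (hΦderiv s hs).hasDerivWithinAt) hqint
  have hΦT : Φ T - Φ 0 = S ^ 2 * (θ T - θ 0) + 2 * R * μ := by
    rw [hΦdef]
    simp only [hend, h0]
    ring
  have hstar : (1/2) * (S ^ 2 * (θ T - θ 0) + 2 * R * μ) = π * R ^ 2 / 2 + 2 * R * h := by
    rw [← hΦT, ← hFTC]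
    exact harea
  -- injectivity bounds on the winding
  have hz_of_eq : ∀ s₁ ∈ Set.Icc 0 T, ∀ s₂ ∈ Set.Icc 0 T, z s₁ = z s₂ → ρ s₁ = ρ s₂ := by
    intro s₁ hs₁ s₂ hs₂ hzz
    have hre := congrArg Complex.re hzz
    have him := congrArg Complex.im hzz
    rw [hzre, hzre] at hre
    rw [hzim, hzim] at him
    rw [hclampeq s₁ hs₁, hclampeq s₂ hs₂] at hre him
    exact Prod.ext (by linarith) (by linarith)
  have hperiod : ∀ x : ℝ, Complex.exp ((x + 2*π : ℝ) * Complex.I) =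
      Complex.exp ((x : ℝ) * Complex.I) := by
    intro x
    push_cast
    rw [add_mul, Complex.exp_add, Complex.exp_two_pi_mul_I, mul_one]
  have hzval : ∀ s₁ ∈ Set.Icc 0 T, ∀ s₂ ∈ Set.Icc 0 T, θ s₁ = θ s₂ + 2*π → ρ s₁ = ρ s₂ := by
    intro s₁ hs₁ s₂ hs₂ hθeq
    apply hz_of_eq s₁ hs₁ s₂ hs₂
    rw [← hθexp s₁ hs₁, ← hθexp s₂ hs₂, hθeq]
    rw [hperiod (θ s₂)]
  have hρ0T : ρ T ≠ ρ 0 := by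
    rw [h0, hend]
    intro hcon
    have := congrArg Prod.snd hcon
    simp only at this
    linarith
  have hiv : ∀ s₂ ∈ Set.Icc 0 T, ρ s₂ = ρ 0 → s₂ = 0 ∨ s₂ = T := by
    intro s₂ hs₂ hρeq
    rcases eq_or_lt_of_le hs₂.2 with hT' | hlt
    · right; exact hT'
    · left
      exact hinj ⟨hs₂.1, hlt⟩ ⟨le_rfl, hT⟩ hρeq
  have hΔub : θ T - θ 0 < 2*π := by
    by_contra hcon
    push_neg at hcon
    have hmemv : θ 0 + 2*π ∈ Set.Icc (θ 0) (θ T) := ⟨by linarith, by linarith⟩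
    obtain ⟨s₂, hs₂mem, hs₂⟩ := intermediate_value_Icc hT.le hθcont.continuousOn hmemv
    have hρeq : ρ s₂ = ρ 0 := hzval s₂ hs₂mem 0 hmem0 hs₂
    rcases hiv s₂ hs₂mem hρeq with h' | h'
    · rw [h'] at hs₂; linarith
    · rw [h'] at hρeq; exact hρ0T hρeq
  have hΔlb : -(2*π) < θ T - θ 0 := by
    by_contra hcon
    push_neg at hcon
    have hmemv : θ 0 - 2*π ∈ Set.Icc (θ T) (θ 0) := ⟨by linarith, by linarith⟩
    obtain ⟨s₂, hs₂mem, hs₂⟩ := intermediate_value_Icc' hT.le hθcont.continuousOn hmemv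
    have hρeq : ρ s₂ = ρ 0 := (hzval 0 hmem0 s₂ hs₂mem (by linarith)).symm
    rcases hiv s₂ hs₂mem hρeq with h' | h'
    · rw [h'] at hs₂; linarith
    · rw [h'] at hρeq; exact hρ0T hρeq
  -- the angle α
  set α := Real.arcsin (μ/S) with hαdef
  have hdivlb : -1 ≤ μ/S := by rw [le_div_iff₀ hS]; linarith
  have hdivub : μ/S ≤ 1 := by rw [div_le_one hS]; linarith
  have hsinα : Real.sin α = μ/S := Real.sin_arcsin hdivlb hdivub
  have hcosα : Real.cos α = R/S := by
    rw [hαdef, Real.cos_arcsin]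
    have h1 : 1 - (μ/S)^2 = (R/S)^2 := by
      field_simp
      linarith [hS2]
    rw [h1, Real.sqrt_sq (by positivity)]
  have hαlt : α < π/2 := Real.arcsin_lt_pi_div_two.mpr (by rw [div_lt_one hS]; linarith)
  have hαgt : -(π/2) < α := Real.neg_pi_div_two_lt_arcsin.mpr (by
    rw [lt_div_iff₀ hS]; linarith)
  have hμeq : μ = S * Real.sin α := by rw [hsinα]; field_simp
  have hReq : R = S * Real.cos α := by rw [hcosα]; field_simp
  have hSC : (S:ℂ) ≠ 0 := by exact_mod_cast hS.ne'
  -- endpoint values of z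
  have hzTv : z T = (↑(-μ) + ↑R * Complex.I : ℂ) := by
    rw [hzdef]
    simp only [hclampeq T hmemT, hend]
    push_cast
    ring
  have hz0v : z 0 = (↑(-μ) + ↑(-R) * Complex.I : ℂ) := by
    rw [hzdef]
    simp only [hclampeq 0 hmem0, h0]
    push_cast
    ring
  -- the winding is congruent to 2α - π mod 2π
  have hexpΔ : Complex.exp ((θ T - θ 0 : ℝ) * Complex.I) = z T / z 0 := by
    rw [← hθexp T hmemT, ← hθexp 0 hmem0, mul_div_mul_left _ _ hSC, ← Complex.exp_sub]
    congr 1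
    push_cast
    ring
  have hexpα : Complex.exp ((2*α - π : ℝ) * Complex.I) = z T / z 0 := by
    rw [eq_div_iff (hzne 0), hz0v, hzTv, Complex.exp_mul_I, ← Complex.ofReal_cos,
      ← Complex.ofReal_sin, Real.cos_sub_pi, Real.sin_sub_pi, Real.cos_two_mul,
      Real.sin_two_mul, hsinα, hcosα]
    apply Complex.ext
    · simp only [Complex.add_re, Complex.mul_re, Complex.ofReal_re, Complex.ofReal_im,
        Complex.I_re, Complex.I_im, Complex.add_im, Complex.mul_im]
      field_simp
      ring
    · simp only [Complex.add_re, Complex.mul_re, Complex.ofReal_re, Complex.ofReal_im,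
        Complex.I_re, Complex.I_im, Complex.add_im, Complex.mul_im]
      field_simp
      linear_combination (-2)*R*hS2
  have honeΔ : Complex.exp ((θ T - θ 0 - (2*α - π) : ℝ) * Complex.I) = 1 := by
    have hexpΔ' : Complex.exp (((θ T : ℂ) - (θ 0 : ℂ)) * Complex.I) = z T / z 0 := by
      have hh' := hexpΔ; push_cast at hh'; exact hh'
    have hexpα' : Complex.exp ((2*(α:ℂ) - (π:ℂ)) * Complex.I) = z T / z 0 := by
      have hh' := hexpα; push_cast at hh'; exact hh'
    have hne : z T / z 0 ≠ 0 := div_ne_zero (hzne T) (hzne 0)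
    push_cast
    rw [sub_mul, Complex.exp_sub, hexpΔ', hexpα', div_self hne]
  obtain ⟨k, hk⟩ := Complex.exp_eq_one_iff.mp honeΔ
  have hkreal : θ T - θ 0 - (2*α - π) = k * (2 * π) := by
    have := congrArg Complex.im hk
    simpa using this
  have hΔub' : 2*α - π < 0 := by linarith
  have hΔlb' : -(2*π) < 2*α - π := by linarith
  have h2pi : (0:ℝ) < 2*π := by linarith
  have hk01 : k = 0 ∨ k = 1 := by
    have hkub : (k:ℝ) < 2 := by
      have h1 : (k:ℝ)*(2*π) < 4*π := by linarith
      by_contra hc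
      push_neg at hc
      have := mul_le_mul_of_nonneg_right hc h2pi.le
      linarith
    have hklb : (-1:ℝ) < (k:ℝ) := by
      have h1 : -(2*π) < (k:ℝ)*(2*π) := by linarith
      by_contra hc
      push_neg at hc
      have := mul_le_mul_of_nonneg_right hc h2pi.le
      linarith
    have h1' : (-1:ℤ) < k := by exact_mod_cast hklb
    have h2' : k < (2:ℤ) := by exact_mod_cast hkub
    omega
  have hRμ : R * μ = S^2 * (Real.sin α * Real.cos α) := by
    rw [hμeq, hReq]; ring
  rcases hk01 with hk0 | hk1
  · -- k = 0 : contradiction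
    exfalso
    rw [hk0] at hkreal
    push_cast at hkreal
    have hΔeq : θ T - θ 0 = 2*α - π := by linarith
    rw [hΔeq] at hstar
    have hsc : Real.sin α * Real.cos α ≤ π/2 - α := by
      have h1 : Real.sin (π - 2*α) ≤ π - 2*α := Real.sin_le (by linarith)
      rw [Real.sin_pi_sub, Real.sin_two_mul] at h1
      linarith
    have e1 : π*R^2/2 + 2*R*h
        = S^2*α - S^2*(π/2) + S^2*(Real.sin α * Real.cos α) := by
      linear_combination -hstar + hRμ
    have e2 : S^2 * (Real.sin α * Real.cos α) ≤ S^2 * (π/2 - α) :=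
      mul_le_mul_of_nonneg_left hsc (sq_nonneg S)
    have e3 : (0:ℝ) < π*R^2/2 + 2*R*h := by positivity
    linarith [e1, e2, e3]
  · -- k = 1
    rw [hk1] at hkreal
    push_cast at hkreal
    have hΔeq : θ T - θ 0 = 2*α + π := by linarith
    rw [hΔeq] at hstar
    have hR2 : R^2 = S^2 * Real.cos α^2 := by rw [hReq]; ring
    have hμ2 : μ^2 = S^2 * Real.sin α^2 := by rw [hμeq]; ring
    have e1 : π*R^2/2 + 2*R*h
        = S^2*α + S^2*(π/2) + S^2*(Real.sin α * Real.cos α) := by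
      linear_combination -hstar + hRμ
    have hαpos : 0 < α := by
      by_contra hα
      push_neg at hα
      have hL1 := stmt17_aux1 (-α) (by linarith) (by linarith)
      rw [Real.sin_neg, Real.cos_neg] at hL1
      have hα3 : α + Real.sin α*Real.cos α + π/2*Real.sin α^2 ≤ 0 := by
        have hsq : (-Real.sin α)^2 = Real.sin α^2 := by ring
        rw [hsq] at hL1
        linarith
      have e2 : S^2*(α + Real.sin α*Real.cos α + π/2*Real.sin α^2) ≤ S^2*0 :=
        mul_le_mul_of_nonneg_left hα3 (sq_nonneg S)
      rw [mul_zero] at e2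
      have e5 : π*S^2 = π*R^2 + π*μ^2 := by linear_combination π*hS2
      have e6 : π*(S^2*Real.sin α^2) = π*μ^2 := by linear_combination -π*hμ2
      have e7 : (0:ℝ) < R*h := mul_pos hR hh
      linarith [e1, e2, e5, e6, e7]
    have hsinpos : 0 < Real.sin α := Real.sin_pos_of_pos_of_lt_pi hαpos (by linarith)
    have hμpos : 0 < μ := by rw [hμeq]; exact mul_pos hS hsinpos
    have hRS : R < S := by
      by_contra hc
      push_neg at hc
      have h1 : S*S ≤ R*R := mul_self_le_mul_self hS.le hc
      have h2 : 0 < μ*μ := mul_pos hμpos hμpos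
      have h3 : μ^2 = μ*μ := sq μ
      have h4 : S^2 = S*S := sq S
      have h5 : R^2 = R*R := sq R
      linarith [hS2]
    have hsc2 : Real.sin α * Real.cos α ≤ α := by
      have h1 := Real.sin_le hαpos.le
      have h2 := mul_le_mul_of_nonneg_left (Real.cos_le_one α) hsinpos.le
      rw [mul_one] at h2
      linarith
    have hupper := stmt17_aux2 α hαpos.le hαlt.le
    have hSμ : S * μ = S^2 * Real.sin α := by rw [hμeq]; ring
    refine ⟨hRS, μ, hμpos, Prod.ext rfl hc2, hS2, ?_, ?_⟩
    · have e2 : S^2*(Real.sin α * Real.cos α) ≤ S^2*α :=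
        mul_le_mul_of_nonneg_left hsc2 (sq_nonneg S)
      linarith [e1, e2, hRμ]
    · have e2 : S^2*α ≤ S^2*(Real.sin α * (2 - Real.cos α)) :=
        mul_le_mul_of_nonneg_left hupper (sq_nonneg S)
      linarith [e1, e2, hSμ]
end

section
/- For the Heisenberg group ℍ with a left-invariant subRiemannian metric d whose horizontal space is (V, g) with π|_V : V → 𝔥/[𝔥,𝔥] surjective, the abelianization map π̂ : (ℍ, d) → (𝔥/[𝔥,𝔥], ‖·‖) is a submetry, where ‖w‖ := inf{√g(v,v) : v ∈ V, π(v) = w}. Equivalently, for all R > 0: π̂({p ∈ ℍ : d(0,p) ≤ R}) = {w : ‖w‖ ≤ R}. -/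
open Real

/-- The differential of left translation by `p` in the Heisenberg group
(exponential coordinates) applied to `v ∈ 𝔥`:
`dL_p(v) = (v₁, v₂, v₃ + (p₁v₂ - p₂v₁)/2)`. -/
noncomputable def HL (p v : ℝ × ℝ × ℝ) : ℝ × ℝ × ℝ :=
  (v.1, v.2.1, v.2.2 + (p.1 * v.2.1 - p.2.1 * v.1) / 2)

/-- The abelianization projection `π : 𝔥 → 𝔥/[𝔥,𝔥] ≅ ℝ²` (and `π̂` on the group). -/
noncomputable def Hproj (p : ℝ × ℝ × ℝ) : ℝ × ℝ := (p.1, p.2.1)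

/-- The left-invariant subRiemannian distance with horizontal space `(V, g)`:
infimum of `∫₀¹ √(g(v(t),v(t)))` over curves whose Maurer–Cartan derivative
`v(t)` lies in `V`. -/
noncomputable def dsub (V : Submodule ℝ (ℝ × ℝ × ℝ))
    (g : (ℝ × ℝ × ℝ) → (ℝ × ℝ × ℝ) → ℝ) (p q : ℝ × ℝ × ℝ) : ℝ :=
  sInf {L | ∃ (γ v : ℝ → ℝ × ℝ × ℝ), Continuous v ∧ γ 0 = p ∧ γ 1 = q ∧
    (∀ t ∈ Set.Icc (0:ℝ) 1, v t ∈ V ∧ HasDerivAt γ (HL (γ t) (v t)) t) ∧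
    L = ∫ t in (0:ℝ)..1, Real.sqrt (g (v t) (v t))}

/-- The norm induced on the abelianization: `‖w‖ = inf{√g(v,v) : v ∈ V, π(v) = w}`. -/
noncomputable def Nsub (V : Submodule ℝ (ℝ × ℝ × ℝ))
    (g : (ℝ × ℝ × ℝ) → (ℝ × ℝ × ℝ) → ℝ) (w : ℝ × ℝ) : ℝ :=
  sInf {r | ∃ v ∈ V, Hproj v = w ∧ r = Real.sqrt (g v v)}

lemma hasDerivAt_fst' {f : ℝ → ℝ × ℝ × ℝ} {k : ℝ × ℝ × ℝ} {t : ℝ}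
    (h : HasDerivAt f k t) : HasDerivAt (fun s => (f s).1) k.1 t := by
  have h2 := (ContinuousLinearMap.fst ℝ ℝ (ℝ × ℝ)).hasFDerivAt.comp t h.hasFDerivAt
  have : (ContinuousLinearMap.fst ℝ ℝ (ℝ × ℝ)).comp
      ((1 : ℝ →L[ℝ] ℝ).smulRight k) = (1 : ℝ →L[ℝ] ℝ).smulRight k.1 := by
    ext x; simp
  rw [hasDerivAt_iff_hasFDerivAt]
  exact h2.congr_fderiv (by ext; simp)

lemma hasDerivAt_snd' {f : ℝ → ℝ × ℝ × ℝ} {k : ℝ × ℝ × ℝ} {t : ℝ}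
    (h : HasDerivAt f k t) : HasDerivAt (fun s => (f s).2.1) k.2.1 t := by
  have h2 := ((ContinuousLinearMap.fst ℝ ℝ ℝ).comp
      (ContinuousLinearMap.snd ℝ ℝ (ℝ × ℝ))).hasFDerivAt.comp t h.hasFDerivAt
  have : ((ContinuousLinearMap.fst ℝ ℝ ℝ).comp (ContinuousLinearMap.snd ℝ ℝ (ℝ × ℝ))).comp
      ((1 : ℝ →L[ℝ] ℝ).smulRight k) = (1 : ℝ →L[ℝ] ℝ).smulRight k.2.1 := by
    ext x; simp
  rw [hasDerivAt_iff_hasFDerivAt]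
  exact h2.congr_fderiv (by ext; simp)

section gfacts
variable {g : (ℝ × ℝ × ℝ) → (ℝ × ℝ × ℝ) → ℝ}
variable (hg_symm : ∀ v w, g v w = g w v)
variable (hg_add : ∀ u v w, g (u + v) w = g u w + g v w)
variable (hg_smul : ∀ (r : ℝ) (v w), g (r • v) w = r * g v w)

include hg_symm hg_add hg_smul

lemma hg_add' : ∀ u v w, g u (v + w) = g u v + g u w := by
  intro u v w
  rw [hg_symm, hg_add, hg_symm v u, hg_symm w u]

lemma hg_smul' : ∀ (r : ℝ) (v w), g v (r • w) = r * g v w := by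
  intro r v w
  rw [hg_symm, hg_smul, hg_symm w v]

lemma gexp (v w : ℝ × ℝ × ℝ) :
    g v w = v.1 * w.1 * g (1,0,0) (1,0,0) + v.1 * w.2.1 * g (1,0,0) (0,1,0)
      + v.1 * w.2.2 * g (1,0,0) (0,0,1)
      + v.2.1 * w.1 * g (0,1,0) (1,0,0) + v.2.1 * w.2.1 * g (0,1,0) (0,1,0)
      + v.2.1 * w.2.2 * g (0,1,0) (0,0,1)
      + v.2.2 * w.1 * g (0,0,1) (1,0,0) + v.2.2 * w.2.1 * g (0,0,1) (0,1,0)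
      + v.2.2 * w.2.2 * g (0,0,1) (0,0,1) := by
  obtain ⟨a, b, c⟩ := v
  obtain ⟨d, e, f⟩ := w
  have hv : ((a, b, c) : ℝ × ℝ × ℝ)
      = a • ((1,0,0) : ℝ × ℝ × ℝ) + b • (0,1,0) + c • (0,0,1) := by
    simp [Prod.ext_iff]
  have hw : ((d, e, f) : ℝ × ℝ × ℝ)
      = d • ((1,0,0) : ℝ × ℝ × ℝ) + e • (0,1,0) + f • (0,0,1) := by
    simp [Prod.ext_iff]
  conv_lhs => rw [hv, hw]
  simp only [hg_add, hg_smul, hg_add' hg_symm hg_add hg_smul,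
    hg_smul' hg_symm hg_add hg_smul]
  ring

lemma gcont' {α : Type*} [TopologicalSpace α] {f h : α → ℝ × ℝ × ℝ}
    (hf : Continuous f) (hh : Continuous h) :
    Continuous fun t => g (f t) (h t) := by
  have : (fun t => g (f t) (h t)) = fun t =>
      (f t).1 * (h t).1 * g (1,0,0) (1,0,0) + (f t).1 * (h t).2.1 * g (1,0,0) (0,1,0)
      + (f t).1 * (h t).2.2 * g (1,0,0) (0,0,1)
      + (f t).2.1 * (h t).1 * g (0,1,0) (1,0,0) + (f t).2.1 * (h t).2.1 * g (0,1,0) (0,1,0)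
      + (f t).2.1 * (h t).2.2 * g (0,1,0) (0,0,1)
      + (f t).2.2 * (h t).1 * g (0,0,1) (1,0,0) + (f t).2.2 * (h t).2.1 * g (0,0,1) (0,1,0)
      + (f t).2.2 * (h t).2.2 * g (0,0,1) (0,0,1) :=
    funext fun t => gexp hg_symm hg_add hg_smul _ _
  rw [this]
  fun_prop

end gfacts

lemma bilinCS {B : (ℝ × ℝ) → (ℝ × ℝ) → ℝ}
    (hsymm : ∀ x y, B x y = B y x)
    (hadd : ∀ x y z, B (x + y) z = B x z + B y z)
    (hsmul : ∀ (r : ℝ) (x y), B (r • x) y = r * B x y)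
    (hpsd : ∀ x, 0 ≤ B x x) (x y : ℝ × ℝ) :
    B x y ≤ Real.sqrt (B x x) * Real.sqrt (B y y) := by
  have hadd' : ∀ x y z, B x (y + z) = B x y + B x z := by
    intro a b c; rw [hsymm, hadd, hsymm b a, hsymm c a]
  have hsmul' : ∀ (r : ℝ) (x y), B x (r • y) = r * B x y := by
    intro r a b; rw [hsymm, hsmul, hsymm b a]
  have expand : ∀ r : ℝ, B (x + r • y) (x + r • y)
      = B x x + 2 * r * B x y + r ^ 2 * B y y := by
    intro r
    simp only [hadd, hadd', hsmul, hsmul']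
    rw [hsymm y x]
    ring
  have key : (B x y) ^ 2 ≤ B x x * B y y := by
    rcases eq_or_lt_of_le (hpsd y) with hy | hy
    · -- B y y = 0
      by_contra hk
      have hxy : B x y ≠ 0 := by
        intro h
        rw [h] at hk
        exact hk (by nlinarith [hpsd x])
      have h0 := hpsd (x + (-(B x x + 1) / (2 * B x y)) • y)
      rw [expand, ← hy] at h0
      have h2 : 2 * (-(B x x + 1) / (2 * B x y)) * B x y = -(B x x + 1) := by
        field_simp
      nlinarith [h0]
    · have h0 := hpsd (x + (-(B x y / B y y)) • y)
      rw [expand] at h0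
      have hBy : B y y ≠ 0 := ne_of_gt hy
      have h2 : B x x + 2 * (-(B x y / B y y)) * B x y + (-(B x y / B y y)) ^ 2 * B y y
          = B x x - (B x y) ^ 2 / B y y := by field_simp; ring
      rw [h2] at h0
      nlinarith [mul_nonneg h0 hy.le, div_mul_cancel₀ ((B x y) ^ 2) hBy]
  calc B x y ≤ |B x y| := le_abs_self _
    _ = Real.sqrt ((B x y) ^ 2) := (Real.sqrt_sq_eq_abs _).symm
    _ ≤ Real.sqrt (B x x * B y y) := Real.sqrt_le_sqrt key
    _ = Real.sqrt (B x x) * Real.sqrt (B y y) := Real.sqrt_mul (hpsd x) _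

lemma hderiv_cos (ω t : ℝ) :
    HasDerivAt (fun s => Real.cos (ω * s)) (-(ω * Real.sin (ω * t))) t := by
  have h := (Real.hasDerivAt_cos (ω * t)).comp t ((hasDerivAt_id t).const_mul ω)
  refine h.congr_deriv (Eq.symm ?_)
  ring

lemma hderiv_sin (ω t : ℝ) :
    HasDerivAt (fun s => Real.sin (ω * s)) (ω * Real.cos (ω * t)) t := by
  have h := (Real.hasDerivAt_sin (ω * t)).comp t ((hasDerivAt_id t).const_mul ω)
  refine h.congr_deriv (Eq.symm ?_)
  ring

lemma chow (V : Submodule ℝ (ℝ × ℝ × ℝ)) (x3 y3 : ℝ)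
    (hX : ((1:ℝ), (0:ℝ), x3) ∈ V) (hY : ((0:ℝ), (1:ℝ), y3) ∈ V) (p : ℝ × ℝ × ℝ) :
    ∃ γ v : ℝ → ℝ × ℝ × ℝ, Continuous v ∧ γ 0 = 0 ∧ γ 1 = p ∧
      ∀ t ∈ Set.Icc (0:ℝ) 1, v t ∈ V ∧ HasDerivAt γ (HL (γ t) (v t)) t := by
  obtain ⟨p₁, p₂, p₃⟩ := p
  set ω : ℝ := 2 * π with hω
  set c : ℝ := p₃ - x3 * p₁ - y3 * p₂ with hc
  set σ : ℝ := (p₂ - c) / π with hσ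
  set γ₁ : ℝ → ℝ := fun t => p₁ * t + 1 - Real.cos (ω * t) with hγ₁
  set γ₂ : ℝ → ℝ := fun t => p₂ * t + σ * Real.sin (ω * t) with hγ₂
  set F : ℝ → ℝ := fun t =>
    (p₁ * σ * t * Real.sin (ω * t) + 2 * p₁ * σ * (Real.cos (ω * t) - 1) / ω
      + p₂ * t * Real.cos (ω * t) - 2 * p₂ * Real.sin (ω * t) / ω
      + p₂ * t + σ * Real.sin (ω * t) - σ * ω * t) / 2 with hF
  set a : ℝ → ℝ := fun t => p₁ + ω * Real.sin (ω * t) with ha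
  set b : ℝ → ℝ := fun t => p₂ + σ * ω * Real.cos (ω * t) with hb
  refine ⟨fun t => (γ₁ t, γ₂ t, x3 * γ₁ t + y3 * γ₂ t + F t),
    fun t => a t • ((1:ℝ), (0:ℝ), x3) + b t • ((0:ℝ), (1:ℝ), y3), ?_, ?_, ?_, ?_⟩
  · fun_prop
  · simp [hγ₁, hγ₂, hF, Prod.ext_iff]
  · have hcos : Real.cos (ω * 1) = 1 := by rw [mul_one, hω, Real.cos_two_pi]
    have hsin : Real.sin (ω * 1) = 0 := by rw [mul_one, hω, Real.sin_two_pi]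
    have hπ : (π : ℝ) ≠ 0 := Real.pi_ne_zero
    simp only [hγ₁, hγ₂, hF, hcos, hsin, Prod.ext_iff]
    refine ⟨by ring, by ring, ?_⟩
    simp only [hσ, hω]
    field_simp
    ring
  · intro t _
    constructor
    · exact Submodule.add_mem V (Submodule.smul_mem V _ hX) (Submodule.smul_mem V _ hY)
    · have h1 : HasDerivAt γ₁ (a t) t := by
        have := (((hasDerivAt_id t).const_mul p₁).add_const 1).sub (hderiv_cos ω t)
        refine this.congr_deriv (Eq.symm ?_)
        simp only [ha, id_eq]; ring
      have h2 : HasDerivAt γ₂ (b t) t := by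
        have := ((hasDerivAt_id t).const_mul p₂).add ((hderiv_sin ω t).const_mul σ)
        refine this.congr_deriv (Eq.symm ?_)
        simp only [hb, id_eq]; ring
      have hωne : ω ≠ 0 := by
        rw [hω]; positivity
      have hFd : HasDerivAt F ((p₁ * σ * (Real.sin (ω * t) + t * (ω * Real.cos (ω * t)))
          + -(2 * p₁ * σ * Real.sin (ω * t))
          + p₂ * (Real.cos (ω * t) + t * (-(ω * Real.sin (ω * t))))
          - 2 * p₂ * Real.cos (ω * t)
          + p₂ + σ * (ω * Real.cos (ω * t)) - σ * ω) / 2) t := by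
        have T1 : HasDerivAt (fun t => p₁ * σ * t * Real.sin (ω * t))
            (p₁ * σ * (Real.sin (ω * t) + t * (ω * Real.cos (ω * t)))) t := by
          have := ((hasDerivAt_id t).const_mul (p₁ * σ)).mul (hderiv_sin ω t)
          refine this.congr_deriv (Eq.symm ?_)
          simp only [id_eq]; ring
        have T2 : HasDerivAt (fun t => 2 * p₁ * σ * (Real.cos (ω * t) - 1) / ω)
            (-(2 * p₁ * σ * Real.sin (ω * t))) t := by
          have := (((hderiv_cos ω t).sub_const 1).const_mul (2 * p₁ * σ)).div_const ω
          refine this.congr_deriv (Eq.symm ?_)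
          field_simp
        have T3 : HasDerivAt (fun t => p₂ * t * Real.cos (ω * t))
            (p₂ * (Real.cos (ω * t) + t * (-(ω * Real.sin (ω * t))))) t := by
          have := ((hasDerivAt_id t).const_mul p₂).mul (hderiv_cos ω t)
          refine this.congr_deriv (Eq.symm ?_)
          simp only [id_eq]; ring
        have T4 : HasDerivAt (fun t => 2 * p₂ * Real.sin (ω * t) / ω)
            (2 * p₂ * Real.cos (ω * t)) t := by
          have := ((hderiv_sin ω t).const_mul (2 * p₂)).div_const ω
          refine this.congr_deriv (Eq.symm ?_)
          field_simp
        have T5 : HasDerivAt (fun t : ℝ => p₂ * t) p₂ t := by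
          simpa using (hasDerivAt_id t).const_mul p₂
        have T6 : HasDerivAt (fun t => σ * Real.sin (ω * t)) (σ * (ω * Real.cos (ω * t))) t :=
          (hderiv_sin ω t).const_mul σ
        have T7 : HasDerivAt (fun t : ℝ => σ * ω * t) (σ * ω) t := by
          simpa using (hasDerivAt_id t).const_mul (σ * ω)
        exact ((((((T1.add T2).add T3).sub T4).add T5).add T6).sub T7).div_const 2
      have h3 : HasDerivAt (fun t => x3 * γ₁ t + y3 * γ₂ t + F t)
          (x3 * a t + y3 * b t + (γ₁ t * b t - γ₂ t * a t) / 2) t := by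
        have := ((h1.const_mul x3).add (h2.const_mul y3)).add hFd
        refine this.congr_deriv (Eq.symm ?_)
        simp only [hγ₁, hγ₂, ha, hb]
        have hpy := Real.sin_sq_add_cos_sq (ω * t)
        linear_combination (-(σ * ω / 2)) * hpy
      have heq : HL (γ₁ t, γ₂ t, x3 * γ₁ t + y3 * γ₂ t + F t)
          (a t • ((1:ℝ), (0:ℝ), x3) + b t • ((0:ℝ), (1:ℝ), y3))
          = (a t, b t, x3 * a t + y3 * b t + (γ₁ t * b t - γ₂ t * a t) / 2) := by
        simp only [HL, Prod.smul_mk, Prod.mk_add_mk, smul_eq_mul, Prod.ext_iff]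
        norm_num
        ring
      rw [heq]
      exact h1.prodMk (h2.prodMk h3)

lemma core (V : Submodule ℝ (ℝ × ℝ × ℝ))
    (g : (ℝ × ℝ × ℝ) → (ℝ × ℝ × ℝ) → ℝ)
    (hg_symm : ∀ v w, g v w = g w v)
    (hg_add : ∀ u v w, g (u + v) w = g u w + g v w)
    (hg_smul : ∀ (r : ℝ) (v w), g (r • v) w = r * g v w)
    (hg_pos : ∀ v ∈ V, v ≠ 0 → 0 < g v v)
    (x3 y3 : ℝ) (hX : ((1:ℝ), (0:ℝ), x3) ∈ V) (hY : ((0:ℝ), (1:ℝ), y3) ∈ V)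
    (m : ℝ × ℝ → ℝ × ℝ × ℝ)
    (hmc : Continuous m)
    (hmV : ∀ w, m w ∈ V)
    (hmp : ∀ w, Hproj (m w) = w)
    (hml : ∀ w : ℝ × ℝ, m w = w.1 • m (1, 0) + w.2 • m (0, 1))
    (hmin : ∀ w, ∀ u ∈ V, Hproj u = w → g (m w) (m w) ≤ g u u)
    (R : ℝ) :
    Hproj '' {p | dsub V g 0 p ≤ R} = {w | Nsub V g w ≤ R} := by
  have hga := hg_add' hg_symm hg_add hg_smul
  have hgs := hg_smul' hg_symm hg_add hg_smul
  have hg_nn : ∀ u ∈ V, 0 ≤ g u u := by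
    intro u hu
    rcases eq_or_ne u 0 with rfl | h
    · have h0 := hg_smul 0 0 0
      simp only [zero_smul, zero_mul] at h0
      exact le_of_eq h0.symm
    · exact (hg_pos u hu h).le
  set B : (ℝ × ℝ) → (ℝ × ℝ) → ℝ := fun w z => g (m w) (m z) with hB
  set N : (ℝ × ℝ) → ℝ := fun w => Real.sqrt (B w w) with hN
  have hmadd : ∀ w z : ℝ × ℝ, m (w + z) = m w + m z := by
    intro w z
    rw [hml (w + z), hml w, hml z]
    simp only [Prod.fst_add, Prod.snd_add, add_smul]
    module
  have hmsmul : ∀ (r : ℝ) (w : ℝ × ℝ), m (r • w) = r • m w := by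
    intro r w
    rw [hml (r • w), hml w]
    simp only [Prod.smul_fst, Prod.smul_snd, smul_eq_mul, mul_smul]
    module
  have hBsymm : ∀ w z, B w z = B z w := fun w z => hg_symm _ _
  have hBadd : ∀ w z x, B (w + z) x = B w x + B z x := by
    intro w z x; rw [hB]; simp only [hmadd, hg_add]
  have hBsmul : ∀ (r : ℝ) (w x : ℝ × ℝ), B (r • w) x = r * B w x := by
    intro r w x; rw [hB]; simp only [hmsmul, hg_smul]
  have hBpsd : ∀ w, 0 ≤ B w w := fun w => hg_nn _ (hmV w)
  have hBexp : ∀ z x : ℝ × ℝ, B z x = z.1 * B (1, 0) x + z.2 * B (0, 1) x := by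
    intro z x
    rw [hB]
    simp only
    conv_lhs => rw [hml z]
    rw [hg_add, hg_smul, hg_smul]
  -- Nsub equals N
  have hNsub_eq : ∀ w, Nsub V g w = N w := by
    intro w
    have h1 : Nsub V g w ≤ N w := by
      unfold Nsub
      refine csInf_le ⟨0, ?_⟩ ⟨m w, hmV w, hmp w, rfl⟩
      rintro r ⟨u, hu, hup, rfl⟩
      exact Real.sqrt_nonneg _
    have h2 : N w ≤ Nsub V g w := by
      unfold Nsub
      refine le_csInf ⟨_, ⟨m w, hmV w, hmp w, rfl⟩⟩ ?_
      rintro r ⟨u, hu, hup, rfl⟩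
      exact Real.sqrt_le_sqrt (hmin w u hu hup)
    exact le_antisymm h1 h2
  -- the per-curve lower bound
  have hper : ∀ p : ℝ × ℝ × ℝ, ∀ L ∈ {L | ∃ (γ v : ℝ → ℝ × ℝ × ℝ), Continuous v ∧ γ 0 = 0 ∧
      γ 1 = p ∧ (∀ t ∈ Set.Icc (0:ℝ) 1, v t ∈ V ∧ HasDerivAt γ (HL (γ t) (v t)) t) ∧
      L = ∫ t in (0:ℝ)..1, Real.sqrt (g (v t) (v t))}, N (Hproj p) ≤ L := by
    rintro p L ⟨γ, v, hv, h0, h1, hder, rfl⟩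
    have hIcc : Set.uIcc (0:ℝ) 1 = Set.Icc 0 1 := Set.uIcc_of_le zero_le_one
    have hve : ∀ t ∈ Set.Icc (0:ℝ) 1, v t ∈ V := fun t ht => (hder t ht).1
    have hv1 : Continuous fun t => (v t).1 := continuous_fst.comp hv
    have hv2 : Continuous fun t => (v t).2.1 := continuous_fst.comp (continuous_snd.comp hv)
    have hi1 : IntervalIntegrable (fun t => (v t).1) MeasureTheory.volume 0 1 :=
      hv1.intervalIntegrable _ _
    have hi2 : IntervalIntegrable (fun t => (v t).2.1) MeasureTheory.volume 0 1 :=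
      hv2.intervalIntegrable _ _
    have hp1 : ∫ t in (0:ℝ)..1, (v t).1 = p.1 := by
      have hd1 : ∀ t ∈ Set.uIcc (0:ℝ) 1, HasDerivAt (fun s => (γ s).1) ((v t).1) t := by
        intro t ht
        have h := hasDerivAt_fst' (hder t (hIcc ▸ ht)).2
        simpa [HL] using h
      rw [intervalIntegral.integral_eq_sub_of_hasDerivAt hd1 hi1, h0, h1]
      simp
    have hp2 : ∫ t in (0:ℝ)..1, (v t).2.1 = p.2.1 := by
      have hd2 : ∀ t ∈ Set.uIcc (0:ℝ) 1, HasDerivAt (fun s => (γ s).2.1) ((v t).2.1) t := by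
        intro t ht
        have h := hasDerivAt_snd' (hder t (hIcc ▸ ht)).2
        simpa [HL] using h
      rw [intervalIntegral.integral_eq_sub_of_hasDerivAt hd2 hi2, h0, h1]
      simp
    set P : ℝ × ℝ := Hproj p with hP
    have hcU : Continuous fun t => Hproj (v t) := by
      show Continuous fun t => ((v t).1, (v t).2.1)
      exact hv1.prodMk hv2
    have hcmU : Continuous fun t => m (Hproj (v t)) := hmc.comp hcU
    have hcBU : Continuous fun t => B (Hproj (v t)) P := by
      show Continuous fun t => g (m (Hproj (v t))) (m P)
      exact gcont' hg_symm hg_add hg_smul hcmU continuous_const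
    have hcNU : Continuous fun t => N (Hproj (v t)) := by
      show Continuous fun t => Real.sqrt (g (m (Hproj (v t))) (m (Hproj (v t))))
      exact (gcont' hg_symm hg_add hg_smul hcmU hcmU).sqrt
    have hcgv : Continuous fun t => Real.sqrt (g (v t) (v t)) :=
      (gcont' hg_symm hg_add hg_smul hv hv).sqrt
    have hL0 : 0 ≤ ∫ t in (0:ℝ)..1, Real.sqrt (g (v t) (v t)) :=
      intervalIntegral.integral_nonneg zero_le_one fun t _ => Real.sqrt_nonneg _
    have hint : (∫ t in (0:ℝ)..1, B (Hproj (v t)) P) = B P P := by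
      have heq : (fun t => B (Hproj (v t)) P)
          = fun t => (v t).1 * B (1, 0) P + (v t).2.1 * B (0, 1) P :=
        funext fun t => hBexp (Hproj (v t)) P
      rw [heq, intervalIntegral.integral_add (hi1.mul_const _) (hi2.mul_const _),
        intervalIntegral.integral_mul_const, intervalIntegral.integral_mul_const,
        hp1, hp2, hBexp P P]
      rfl
    have hmono1 : (∫ t in (0:ℝ)..1, B (Hproj (v t)) P)
        ≤ ∫ t in (0:ℝ)..1, N (Hproj (v t)) * N P := by
      apply intervalIntegral.integral_mono_on zero_le_one
        (hcBU.intervalIntegrable _ _) ((hcNU.mul continuous_const).intervalIntegrable _ _)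
      intro t _
      exact bilinCS hBsymm hBadd hBsmul hBpsd _ _
    have hmono2 : (∫ t in (0:ℝ)..1, N (Hproj (v t)))
        ≤ ∫ t in (0:ℝ)..1, Real.sqrt (g (v t) (v t)) := by
      apply intervalIntegral.integral_mono_on zero_le_one
        (hcNU.intervalIntegrable _ _) (hcgv.intervalIntegrable _ _)
      intro t ht
      exact Real.sqrt_le_sqrt (hmin _ _ (hve t ht) rfl)
    rcases eq_or_lt_of_le (Real.sqrt_nonneg (B P P)) with hNP | hNP
    · show N P ≤ _
      rw [hN]
      simp only
      rw [← hNP]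
      exact hL0
    · have hBPP : B P P = N P * N P := (Real.mul_self_sqrt (hBpsd P)).symm
      have hNN : N P * N P ≤ (∫ t in (0:ℝ)..1, N (Hproj (v t))) * N P := by
        rw [← hBPP, ← hint]
        calc (∫ t in (0:ℝ)..1, B (Hproj (v t)) P)
            ≤ ∫ t in (0:ℝ)..1, N (Hproj (v t)) * N P := hmono1
          _ = (∫ t in (0:ℝ)..1, N (Hproj (v t))) * N P := by
              rw [intervalIntegral.integral_mul_const]
      have h6 : N P ≤ ∫ t in (0:ℝ)..1, N (Hproj (v t)) :=
        le_of_mul_le_mul_right hNN hNP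
      exact h6.trans hmono2
  -- bddBelow of the dsub set
  have hbdd : ∀ p : ℝ × ℝ × ℝ, BddBelow {L | ∃ (γ v : ℝ → ℝ × ℝ × ℝ), Continuous v ∧ γ 0 = 0 ∧
      γ 1 = p ∧ (∀ t ∈ Set.Icc (0:ℝ) 1, v t ∈ V ∧ HasDerivAt γ (HL (γ t) (v t)) t) ∧
      L = ∫ t in (0:ℝ)..1, Real.sqrt (g (v t) (v t))} := by
    intro p
    refine ⟨0, ?_⟩
    rintro L ⟨γ, v, _, _, _, _, rfl⟩
    exact intervalIntegral.integral_nonneg zero_le_one fun t _ => Real.sqrt_nonneg _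
  ext w
  simp only [Set.mem_image, Set.mem_setOf_eq]
  constructor
  · rintro ⟨p, hp, rfl⟩
    rw [hNsub_eq]
    refine le_trans ?_ hp
    obtain ⟨γ, v, hvc, hγ0, hγ1, hd⟩ := chow V x3 y3 hX hY p
    have hne : Set.Nonempty {L | ∃ (γ v : ℝ → ℝ × ℝ × ℝ), Continuous v ∧ γ 0 = 0 ∧
        γ 1 = p ∧ (∀ t ∈ Set.Icc (0:ℝ) 1, v t ∈ V ∧ HasDerivAt γ (HL (γ t) (v t)) t) ∧
        L = ∫ t in (0:ℝ)..1, Real.sqrt (g (v t) (v t))} :=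
      ⟨_, γ, v, hvc, hγ0, hγ1, hd, rfl⟩
    exact le_csInf hne (hper p)
  · intro hw
    refine ⟨m w, ?_, hmp w⟩
    have hmem : Real.sqrt (g (m w) (m w)) ∈ {L | ∃ (γ v : ℝ → ℝ × ℝ × ℝ), Continuous v ∧
        γ 0 = 0 ∧ γ 1 = m w ∧ (∀ t ∈ Set.Icc (0:ℝ) 1, v t ∈ V ∧
        HasDerivAt γ (HL (γ t) (v t)) t) ∧
        L = ∫ t in (0:ℝ)..1, Real.sqrt (g (v t) (v t))} := by
      refine ⟨fun t => t • m w, fun _ => m w, continuous_const, by simp, by simp, ?_, by simp⟩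
      intro t _
      refine ⟨hmV w, ?_⟩
      have hHL : HL (t • m w) (m w) = m w := by
        simp only [HL, Prod.smul_fst, Prod.smul_snd, smul_eq_mul, Prod.ext_iff]
        norm_num
        ring
      rw [hHL]
      simpa using (hasDerivAt_id t).smul_const (m w)
    have hle : dsub V g 0 (m w) ≤ Real.sqrt (g (m w) (m w)) := csInf_le (hbdd (m w)) hmem
    calc dsub V g 0 (m w) ≤ Real.sqrt (g (m w) (m w)) := hle
      _ = Nsub V g w := (hNsub_eq w).symm
      _ ≤ R := hw

/-- The abelianization map `π̂ : (ℍ,d) → (𝔥/[𝔥,𝔥], ‖·‖)` is a submetry: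
for every `R > 0`, `π̂({p : d(0,p) ≤ R}) = {w : ‖w‖ ≤ R}`. -/
theorem stmt18 (V : Submodule ℝ (ℝ × ℝ × ℝ))
    (g : (ℝ × ℝ × ℝ) → (ℝ × ℝ × ℝ) → ℝ)
    (hg_symm : ∀ v w, g v w = g w v)
    (hg_add : ∀ u v w, g (u + v) w = g u w + g v w)
    (hg_smul : ∀ (r : ℝ) (v w), g (r • v) w = r * g v w)
    (hg_pos : ∀ v ∈ V, v ≠ 0 → 0 < g v v)
    (hsurj : ∀ w : ℝ × ℝ, ∃ v ∈ V, Hproj v = w) :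
    ∀ R > (0:ℝ),
      Hproj '' {p | dsub V g 0 p ≤ R} = {w | Nsub V g w ≤ R} := by
  intro R _
  have hga := hg_add' hg_symm hg_add hg_smul
  have hgs := hg_smul' hg_symm hg_add hg_smul
  obtain ⟨X, hXV, hXp⟩ := hsurj (1, 0)
  obtain ⟨Y, hYV, hYp⟩ := hsurj (0, 1)
  obtain ⟨x1, x2, x3⟩ := X
  obtain ⟨y1, y2, y3⟩ := Y
  simp only [Hproj, Prod.mk.injEq] at hXp hYp
  obtain ⟨hx1, hx2⟩ := hXp
  obtain ⟨hy1, hy2⟩ := hYp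
  subst hx1; subst hx2; subst hy1; subst hy2
  set e3 : ℝ × ℝ × ℝ := (0, 0, 1) with he3
  set X' : ℝ × ℝ × ℝ := (1, 0, x3) with hX'
  set Y' : ℝ × ℝ × ℝ := (0, 1, y3) with hY'
  by_cases hE : e3 ∈ V
  · -- e3 ∈ V
    have hge : 0 < g e3 e3 := hg_pos e3 hE (by simp [he3, Prod.ext_iff])
    have hgene : g e3 e3 ≠ 0 := ne_of_gt hge
    set m : ℝ × ℝ → ℝ × ℝ × ℝ := fun w =>
      (w.1 • X' + w.2 • Y') + (-(g (w.1 • X' + w.2 • Y') e3) / g e3 e3) • e3 with hm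
    have hmc : Continuous m := by
      have hu : Continuous fun w : ℝ × ℝ => w.1 • X' + w.2 • Y' := by fun_prop
      have hgc : Continuous fun w : ℝ × ℝ => g (w.1 • X' + w.2 • Y') e3 :=
        gcont' hg_symm hg_add hg_smul hu continuous_const
      exact hu.add ((hgc.neg.div_const _).smul continuous_const)
    have hmV : ∀ w, m w ∈ V := fun w =>
      Submodule.add_mem V (Submodule.add_mem V (Submodule.smul_mem V _ hXV)
        (Submodule.smul_mem V _ hYV)) (Submodule.smul_mem V _ hE)
    have hmp : ∀ w, Hproj (m w) = w := by
      intro w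
      simp [hm, Hproj, hX', hY', he3, Prod.ext_iff]
    have hgl : ∀ z : ℝ × ℝ, g (z.1 • X' + z.2 • Y') e3 = z.1 * g X' e3 + z.2 * g Y' e3 :=
      fun z => by rw [hg_add, hg_smul, hg_smul]
    have hml : ∀ w : ℝ × ℝ, m w = w.1 • m (1, 0) + w.2 • m (0, 1) := by
      intro w
      simp only [hm, hgl]
      norm_num
      module
    have hm3 : ∀ w, g (m w) e3 = 0 := by
      intro w
      simp only [hm]
      rw [hg_add, hg_smul]
      field_simp
      ring
    have hmin : ∀ w, ∀ u ∈ V, Hproj u = w → g (m w) (m w) ≤ g u u := by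
      intro w u hu hup
      have h1 : u.1 = w.1 := congrArg Prod.fst hup
      have h2 : u.2.1 = w.2 := congrArg Prod.snd hup
      have hm1 : (m w).1 = w.1 := congrArg Prod.fst (hmp w)
      have hm2 : (m w).2.1 = w.2 := congrArg Prod.snd (hmp w)
      have hdiff : u = m w + (u.2.2 - (m w).2.2) • e3 := by
        simp only [he3, Prod.ext_iff, Prod.smul_mk, smul_eq_mul, Prod.fst_add, Prod.snd_add,
          mul_zero, mul_one, smul_zero, add_zero]
        exact ⟨by rw [h1, hm1], by rw [h2, hm2], by ring⟩
      have hexpand : ∀ (a b : ℝ × ℝ × ℝ) (c : ℝ), g (a + c • b) (a + c • b)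
          = g a a + c * g a b + c * g b a + c * c * g b b := by
        intro a b c
        simp only [hg_add, hga, hg_smul, hgs]
        ring
      conv_rhs => rw [hdiff, hexpand]
      rw [hm3 w, hg_symm e3 (m w), hm3 w]
      nlinarith [mul_nonneg (mul_self_nonneg (u.2.2 - (m w).2.2)) hge.le]
    exact core V g hg_symm hg_add hg_smul hg_pos x3 y3 hXV hYV m hmc hmV hmp hml hmin R
  · -- e3 ∉ V
    set m : ℝ × ℝ → ℝ × ℝ × ℝ := fun w => w.1 • X' + w.2 • Y' with hm
    have hmc : Continuous m := by fun_prop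
    have hmV : ∀ w, m w ∈ V := fun w =>
      Submodule.add_mem V (Submodule.smul_mem V _ hXV) (Submodule.smul_mem V _ hYV)
    have hmp : ∀ w, Hproj (m w) = w := by
      intro w
      simp [hm, Hproj, hX', hY', Prod.ext_iff]
    have hml : ∀ w : ℝ × ℝ, m w = w.1 • m (1, 0) + w.2 • m (0, 1) := by
      intro w
      simp only [hm]
      norm_num
    have hmin : ∀ w, ∀ u ∈ V, Hproj u = w → g (m w) (m w) ≤ g u u := by
      intro w u hu hup
      have h1 : u.1 = w.1 := congrArg Prod.fst hup
      have h2 : u.2.1 = w.2 := congrArg Prod.snd hup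
      have hm1 : (m w).1 = w.1 := congrArg Prod.fst (hmp w)
      have hm2 : (m w).2.1 = w.2 := congrArg Prod.snd (hmp w)
      have hdiff : u - m w = (u.2.2 - (m w).2.2) • e3 := by
        simp only [he3, Prod.ext_iff, Prod.smul_mk, smul_eq_mul, Prod.fst_sub, Prod.snd_sub,
          mul_zero, mul_one, smul_zero]
        exact ⟨by rw [h1, hm1]; ring, by rw [h2, hm2]; ring, trivial⟩
      rcases eq_or_ne (u.2.2 - (m w).2.2) 0 with h0 | h0
      · have : u = m w := by
          have h := hdiff
          rw [h0, zero_smul, sub_eq_zero] at h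
          exact h
        rw [this]
      · exfalso
        apply hE
        have he : e3 = (u.2.2 - (m w).2.2)⁻¹ • (u - m w) := by
          rw [hdiff, smul_smul, inv_mul_cancel₀ h0, one_smul]
        rw [he]
        exact Submodule.smul_mem V _ (Submodule.sub_mem V hu (hmV w))
    exact core V g hg_symm hg_add hg_smul hg_pos x3 y3 hXV hYV m hmc hmV hmp hml hmin R
end
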